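/- Let (Γ,Ψ) be a G-gain graph on a finite group G of order k whose underlying graph Γ is connected, and let L(Γ,Ψ) be its cover graph. Then the following are equivalent: (i) (Γ,Ψ) is balanced; (ii) the adjacency spectrum of L(Γ,Ψ) consists of k copies of the adjacency spectrum of Γ; (iii) the largest adjacency eigenvalue of L(Γ,Ψ) equals the largest adjacency eigenvalue of Γ and occurs with multiplicity k; (iv) L(Γ,Ψ) is isomorphic to the disjoint union of k copies of Γ. -/

import Mathlib

open scoped Kronecker
open Matrix Polynomial Filter

namespace GainPaper

variable {G : Type*} [Group G]

/-- The gain of a walk: product of the gains of its darts. -/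
def walkGain {n : ℕ} {Γ : SimpleGraph (Fin n)} {M : Type*} [Monoid M]
    (Ψ : Fin n → Fin n → M) {u v : Fin n} (p : Γ.Walk u v) : M :=
  (p.darts.map fun d => Ψ d.toProd.1 d.toProd.2).prod

/-- `Ψ` is a gain function on `Γ`: the gain of an edge in the reverse
orientation is the inverse of its gain. -/
def IsGain {n : ℕ} (Γ : SimpleGraph (Fin n)) (Ψ : Fin n → Fin n → G) : Prop :=
  ∀ i j, Γ.Adj i j → Ψ j i = (Ψ i j)⁻¹

/-- A gain graph is balanced if every closed walk has gain `1`. -/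
def IsBalanced {n : ℕ} (Γ : SimpleGraph (Fin n)) {M : Type*} [Monoid M]
    (Ψ : Fin n → Fin n → M) : Prop :=
  ∀ (v : Fin n) (p : Γ.Walk v v), walkGain Ψ p = 1

/-- The adjacency matrix of a gain graph, with entries in the group algebra ℂG. -/
noncomputable def gainAdj {n : ℕ} (Γ : SimpleGraph (Fin n)) [DecidableRel Γ.Adj]
    (Ψ : Fin n → Fin n → G) : Matrix (Fin n) (Fin n) (MonoidAlgebra ℂ G) :=
  Matrix.of fun i j => if Γ.Adj i j then MonoidAlgebra.single (Ψ i j) 1 else 0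

/-- The involution on ℂG: `(Σ f_x x)* = Σ conj(f_x) x⁻¹`. -/
noncomputable def starCG (f : MonoidAlgebra ℂ G) : MonoidAlgebra ℂ G :=
  f.coeff.sum fun x c => MonoidAlgebra.single x⁻¹ (starRingEnd ℂ c)

/-- The involution on M_n(ℂG): `(F*)_{i,j} = (F_{j,i})*`. -/
noncomputable def starM {n : ℕ} (F : Matrix (Fin n) (Fin n) (MonoidAlgebra ℂ G)) :
    Matrix (Fin n) (Fin n) (MonoidAlgebra ℂ G) :=
  Matrix.of fun i j => starCG (F j i)

/-- The trace on M_n(ℂG): sum over the diagonal of the coefficients of `1_G`. -/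
noncomputable def trCG {n : ℕ} (F : Matrix (Fin n) (Fin n) (MonoidAlgebra ℂ G)) : ℂ :=
  ∑ i, (F i i).coeff 1

/-- The Fourier transform of `f ∈ ℂG` at `π`: `Σ_x f(x) π(x)`. -/
noncomputable def fourier {m : Type*} (f : MonoidAlgebra ℂ G) (π : G → Matrix m m ℂ) :
    Matrix m m ℂ :=
  f.coeff.sum fun x c => c • π x

/-- The (finite) set of group elements appearing in some entry of `F`. -/
noncomputable def matSupport {n : ℕ} (F : Matrix (Fin n) (Fin n) (MonoidAlgebra ℂ G)) :
    Finset G :=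
  letI := Classical.decEq G
  Finset.univ.biUnion fun i : Fin n => Finset.univ.biUnion fun j : Fin n => (F i j).coeff.support

/-- `F(x)`: the complex matrix of coefficients of `x` in the entries of `F`. -/
def matCoeff {n : ℕ} (F : Matrix (Fin n) (Fin n) (MonoidAlgebra ℂ G)) (x : G) :
    Matrix (Fin n) (Fin n) ℂ :=
  Matrix.of fun i j => (F i j).coeff x

/-- Fourier transform of `F ∈ M_n(ℂG)` at `π`: `F̂(π) = Σ_{x∈G} F(x) ⊗ π(x)`. -/
noncomputable def fourierM {n : ℕ} {m : Type*} (F : Matrix (Fin n) (Fin n) (MonoidAlgebra ℂ G))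
    (π : G → Matrix m m ℂ) : Matrix (Fin n × m) (Fin n × m) ℂ :=
  ∑ x ∈ matSupport F, matCoeff F x ⊗ₖ π x

/-- A representation is unitary if each `π g` is a unitary matrix. -/
def IsUnitaryRep {m : Type*} [Fintype m] [DecidableEq m] (π : G →* Matrix m m ℂ) : Prop :=
  ∀ g, π g ∈ Matrix.unitaryGroup m ℂ

/-- Irreducibility: the space is nonzero and has no nontrivial invariant subspace. -/
def IsIrred {m : Type*} [Fintype m] [DecidableEq m] (π : G →* Matrix m m ℂ) : Prop :=
  Nonempty m ∧
    ∀ W : Submodule ℂ (m → ℂ), (∀ g, ∀ v ∈ W, (π g).mulVec v ∈ W) → W = ⊥ ∨ W = ⊤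

/-- Equivalence of two matrix representations: an invertible intertwiner. -/
def RepEquiv {m m' : Type*} [Fintype m] [DecidableEq m] [Fintype m'] [DecidableEq m']
    (π : G →* Matrix m m ℂ) (π' : G →* Matrix m' m' ℂ) : Prop :=
  ∃ e : (m → ℂ) ≃ₗ[ℂ] (m' → ℂ), ∀ g v, e ((π g).mulVec v) = (π' g).mulVec (e v)

/-- λ₁: the largest real root of the characteristic polynomial
(= the largest eigenvalue, for a Hermitian matrix). -/
noncomputable def lam1 {m : Type*} [Fintype m] [DecidableEq m] (M : Matrix m m ℂ) : ℝ :=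
  sSup {x : ℝ | M.charpoly.IsRoot (x : ℂ)}

/-- Spectral radius: the sup of the absolute values of the eigenvalues. -/
noncomputable def specRad {m : Type*} [Fintype m] [DecidableEq m] (M : Matrix m m ℂ) : ℝ :=
  sSup {r : ℝ | ∃ μ : ℂ, M.charpoly.IsRoot μ ∧ r = ‖μ‖}

/-- Adjacency relation of the cover graph on `V × G`:
`(u,g) ∼ (v,h)` iff `u ∼ v` and `h = Ψ(u,v)⁻¹ g`. -/
def coverAdj {n : ℕ} (Γ : SimpleGraph (Fin n)) (Ψ : Fin n → Fin n → G) (p q : Fin n × G) :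
    Prop :=
  Γ.Adj p.1 q.1 ∧ q.2 = (Ψ p.1 q.1)⁻¹ * p.2

/-- The {0,1} adjacency matrix of the cover graph. -/
noncomputable def coverMatrix {n : ℕ} [DecidableEq G] (Γ : SimpleGraph (Fin n))
    [DecidableRel Γ.Adj] (Ψ : Fin n → Fin n → G) : Matrix (Fin n × G) (Fin n × G) ℂ :=
  Matrix.of fun p q => if Γ.Adj p.1 q.1 ∧ q.2 = (Ψ p.1 q.1)⁻¹ * p.2 then 1 else 0

/-- The left regular representation, as matrices:
`λ_G(g)_{r,p} = 1` if `g = r p⁻¹`, else `0`. -/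
noncomputable def lamG [DecidableEq G] : G → Matrix G G ℂ :=
  fun g => Matrix.of fun r p => if g = r * p⁻¹ then 1 else 0



/-! ### Auxiliary lemmas -/

section Spectral

variable {V : Type*} [Fintype V] [DecidableEq V]

lemma charpoly_unitary_conj (U : Matrix.unitaryGroup V ℂ) (D : Matrix V V ℂ) :
    ((U : Matrix V V ℂ) * D * star (U : Matrix V V ℂ)).charpoly = D.charpoly := by
  set Um : Matrix V V ℂ[X] := (U : Matrix V V ℂ).map C with hUm
  set Usm : Matrix V V ℂ[X] := (star (U : Matrix V V ℂ)).map C with hUsm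
  have h1 : Um * Usm = 1 := by
    rw [hUm, hUsm, ← Matrix.map_mul, Matrix.mem_unitaryGroup_iff.mp U.2]
    simp
  have h2 : Usm * Um = 1 := by
    rw [hUm, hUsm, ← Matrix.map_mul, Matrix.mem_unitaryGroup_iff'.mp U.2]
    simp
  have hcm : Matrix.charmatrix ((U : Matrix V V ℂ) * D * star (U : Matrix V V ℂ)) =
      Um * Matrix.charmatrix D * Usm := by
    rw [Matrix.charmatrix]
    rw [Matrix.charmatrix]
    simp only [RingHom.mapMatrix_apply]
    have hmap : ((U : Matrix V V ℂ) * D * star (U : Matrix V V ℂ)).map C =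
        Um * D.map C * Usm := by
      rw [hUm, hUsm, ← Matrix.map_mul, ← Matrix.map_mul]
    rw [hmap, Matrix.mul_sub, Matrix.sub_mul]
    congr 1
    have : Um * Matrix.scalar V (X : ℂ[X]) = Matrix.scalar V (X : ℂ[X]) * Um :=
      (Matrix.scalar_commute (X : ℂ[X]) (fun r => Commute.all _ _) Um).symm
    rw [this, mul_assoc, h1, mul_one]
  rw [Matrix.charpoly, hcm, Matrix.det_mul, Matrix.det_mul, mul_comm, ← mul_assoc,
    ← Matrix.det_mul, h2, Matrix.det_one, one_mul, Matrix.charpoly]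

lemma charpoly_diagonal_ofReal (d : V → ℝ) :
    (Matrix.diagonal (fun i => (d i : ℂ))).charpoly = ∏ i, (X - C (d i : ℂ)) := by
  have : Matrix.charmatrix (Matrix.diagonal (fun i => (d i : ℂ))) =
      Matrix.diagonal (fun i => (X : ℂ[X]) - C (d i : ℂ)) := by
    ext i j
    by_cases hij : i = j <;>
      simp [Matrix.charmatrix_apply, Matrix.diagonal_apply, hij]
  rw [Matrix.charpoly, this, Matrix.det_diagonal]

lemma charpoly_hermitian {A : Matrix V V ℂ} (hA : A.IsHermitian) :
    A.charpoly = ∏ i, (X - C (hA.eigenvalues i : ℂ)) := by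
  have h := hA.spectral_theorem
  rw [Unitary.conjStarAlgAut_apply] at h
  calc A.charpoly = ((hA.eigenvectorUnitary : Matrix V V ℂ) *
        Matrix.diagonal (RCLike.ofReal ∘ hA.eigenvalues) *
        star (hA.eigenvectorUnitary : Matrix V V ℂ)).charpoly := by rw [← h]
    _ = (Matrix.diagonal (RCLike.ofReal ∘ hA.eigenvalues)).charpoly :=
        charpoly_unitary_conj _ _
    _ = ∏ i, (X - C (hA.eigenvalues i : ℂ)) := charpoly_diagonal_ofReal _

lemma roots_charpoly_hermitian {A : Matrix V V ℂ} (hA : A.IsHermitian) :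
    A.charpoly.roots = Finset.univ.val.map (fun i => (hA.eigenvalues i : ℂ)) := by
  have hc : (fun i => X - C ((hA.eigenvalues i : ℂ))) =
      (fun a : ℂ => X - C a) ∘ (fun i => (hA.eigenvalues i : ℂ)) := rfl
  rw [charpoly_hermitian hA, Finset.prod_eq_multiset_prod, hc, ← Multiset.map_map,
    Polynomial.roots_multiset_prod_X_sub_C]

lemma rootMultiplicity_charpoly_hermitian {A : Matrix V V ℂ} (hA : A.IsHermitian) (μ : ℂ) :
    A.charpoly.rootMultiplicity μ =
      (Finset.univ.filter (fun i => (hA.eigenvalues i : ℂ) = μ)).card := by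
  classical
  rw [← Polynomial.count_roots, roots_charpoly_hermitian hA, Multiset.count_map]
  rw [Finset.card, Finset.filter_val]
  congr 1
  exact Multiset.filter_congr (fun x _ => eq_comm)

lemma isRoot_charpoly_hermitian_iff {A : Matrix V V ℂ} (hA : A.IsHermitian) (μ : ℂ) :
    A.charpoly.IsRoot μ ↔ ∃ i, (hA.eigenvalues i : ℂ) = μ := by
  classical
  have hne : A.charpoly ≠ 0 := A.charpoly_monic.ne_zero
  rw [← Polynomial.mem_roots hne, roots_charpoly_hermitian hA]
  simp

lemma realRoots_charpoly_hermitian {A : Matrix V V ℂ} (hA : A.IsHermitian) :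
    {x : ℝ | A.charpoly.IsRoot (x : ℂ)} = Set.range hA.eigenvalues := by
  ext x
  simp only [Set.mem_setOf_eq, isRoot_charpoly_hermitian_iff hA, Set.mem_range,
    Complex.ofReal_inj]

lemma lam1_mem {A : Matrix V V ℂ} (hA : A.IsHermitian) [Nonempty V] :
    ∃ i, hA.eigenvalues i = lam1 A := by
  have h := realRoots_charpoly_hermitian hA
  have : lam1 A ∈ {x : ℝ | A.charpoly.IsRoot (x : ℂ)} := by
    rw [lam1]
    apply Set.Nonempty.csSup_mem
    · rw [h]; exact Set.range_nonempty _
    · rw [h]; exact Set.finite_range _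
  rw [h] at this
  exact this

lemma eigenvalues_le_lam1 {A : Matrix V V ℂ} (hA : A.IsHermitian) (i : V) :
    hA.eigenvalues i ≤ lam1 A := by
  apply le_csSup
  · rw [realRoots_charpoly_hermitian hA]; exact (Set.finite_range _).bddAbove
  · rw [realRoots_charpoly_hermitian hA]; exact Set.mem_range_self i

section Rayleigh

variable {A : Matrix V V ℂ}

lemma rclike_ofReal_eq : (RCLike.ofReal : ℝ → ℂ) = Complex.ofReal := rfl

/-- Coordinates of `x` in the eigenbasis. -/
noncomputable def coords (hA : A.IsHermitian) (x : V → ℂ) : V → ℂ :=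
  (star (hA.eigenvectorUnitary : Matrix V V ℂ)).mulVec x

lemma coords_mulVec (hA : A.IsHermitian) (x : V → ℂ) :
    (hA.eigenvectorUnitary : Matrix V V ℂ).mulVec (coords hA x) = x := by
  rw [coords, Matrix.mulVec_mulVec, Matrix.mem_unitaryGroup_iff.mp hA.eigenvectorUnitary.2,
    Matrix.one_mulVec]

lemma star_vecMul_eigenvectorUnitary (hA : A.IsHermitian) (x : V → ℂ) :
    star x ᵥ* (hA.eigenvectorUnitary : Matrix V V ℂ) = star (coords hA x) := by
  rw [coords, Matrix.star_mulVec]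
  congr 1
  rw [Matrix.star_eq_conjTranspose, Matrix.conjTranspose_conjTranspose]

lemma mulVec_eq_spectral (hA : A.IsHermitian) (x : V → ℂ) :
    A.mulVec x = (hA.eigenvectorUnitary : Matrix V V ℂ).mulVec
      ((Matrix.diagonal (RCLike.ofReal ∘ hA.eigenvalues)).mulVec (coords hA x)) := by
  conv_lhs => rw [hA.spectral_theorem, Unitary.conjStarAlgAut_apply]
  rw [← Matrix.mulVec_mulVec, ← Matrix.mulVec_mulVec]
  rfl

lemma quadform_spectral (hA : A.IsHermitian) (x : V → ℂ) :
    Complex.re (star x ⬝ᵥ A.mulVec x) =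
      ∑ i, hA.eigenvalues i * Complex.normSq (coords hA x i) := by
  have h1 : star x ⬝ᵥ A.mulVec x =
      ((∑ i, hA.eigenvalues i * Complex.normSq (coords hA x i) : ℝ) : ℂ) := by
    rw [mulVec_eq_spectral hA x, Matrix.dotProduct_mulVec, star_vecMul_eigenvectorUnitary]
    push_cast
    simp only [dotProduct, Matrix.mulVec_diagonal, Pi.star_apply, Function.comp_apply]
    apply Finset.sum_congr rfl
    intro i _
    rw [Complex.normSq_eq_conj_mul_self, RCLike.star_def]
    simp only [rclike_ofReal_eq]
    ring
  rw [h1, Complex.ofReal_re]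

lemma normform_spectral (hA : A.IsHermitian) (x : V → ℂ) :
    Complex.re (star x ⬝ᵥ x) = ∑ i, Complex.normSq (coords hA x i) := by
  have h1 : star x ⬝ᵥ x = ((∑ i, Complex.normSq (coords hA x i) : ℝ) : ℂ) := by
    have h0 : star x ⬝ᵥ x = star (coords hA x) ⬝ᵥ coords hA x := by
      conv_lhs => rw [← coords_mulVec hA x]
      rw [Matrix.dotProduct_mulVec, star_vecMul_eigenvectorUnitary, coords_mulVec hA x]
    rw [h0]
    push_cast
    simp only [dotProduct, Pi.star_apply]
    apply Finset.sum_congr rfl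
    intro i _
    rw [Complex.normSq_eq_conj_mul_self, RCLike.star_def]
  rw [h1, Complex.ofReal_re]

lemma rayleigh_le (hA : A.IsHermitian) {t : ℝ} (ht : ∀ i, hA.eigenvalues i ≤ t) (x : V → ℂ) :
    Complex.re (star x ⬝ᵥ A.mulVec x) ≤ t * Complex.re (star x ⬝ᵥ x) := by
  rw [quadform_spectral hA x, normform_spectral hA x, Finset.mul_sum]
  exact Finset.sum_le_sum fun i _ =>
    mul_le_mul_of_nonneg_right (ht i) (Complex.normSq_nonneg _)

lemma eigenvec_of_rayleigh_eq (hA : A.IsHermitian) {t : ℝ} (ht : ∀ i, hA.eigenvalues i ≤ t)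
    {x : V → ℂ} (hx : Complex.re (star x ⬝ᵥ A.mulVec x) = t * Complex.re (star x ⬝ᵥ x)) :
    A.mulVec x = (t : ℂ) • x := by
  have hsum : ∑ i, (t - hA.eigenvalues i) * Complex.normSq (coords hA x i) = 0 := by
    have h2 := hx
    rw [quadform_spectral hA x, normform_spectral hA x, Finset.mul_sum] at h2
    simp only [sub_mul]
    rw [Finset.sum_sub_distrib, h2, sub_self]
  have hzero : ∀ i ∈ Finset.univ, (t - hA.eigenvalues i) * Complex.normSq (coords hA x i) = 0 :=
    (Finset.sum_eq_zero_iff_of_nonneg (fun i _ =>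
      mul_nonneg (sub_nonneg.mpr (ht i)) (Complex.normSq_nonneg _))).mp hsum
  have hDc : (Matrix.diagonal (RCLike.ofReal ∘ hA.eigenvalues)).mulVec (coords hA x) =
      (t : ℂ) • coords hA x := by
    funext i
    rw [Matrix.mulVec_diagonal]
    rcases eq_or_ne (coords hA x i) 0 with h | h
    · simp [h]
    · have h3 := hzero i (Finset.mem_univ i)
      have h4 : Complex.normSq (coords hA x i) ≠ 0 := fun hc => h (Complex.normSq_eq_zero.mp hc)
      have h5 : hA.eigenvalues i = t := by
        rcases mul_eq_zero.mp h3 with h6 | h6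
        · linarith [sub_eq_zero.mp h6]
        · exact absurd h6 h4
      simp [Function.comp_apply, h5]
  rw [mulVec_eq_spectral hA x, hDc, Matrix.mulVec_smul, coords_mulVec hA x]

end Rayleigh

section GraphSpectral

variable (Δ : SimpleGraph V) [DecidableRel Δ.Adj]

lemma adj_isHermitian : (Δ.adjMatrix ℂ).IsHermitian := by
  show (Δ.adjMatrix ℂ)ᴴ = Δ.adjMatrix ℂ
  ext i j
  simp [Matrix.conjTranspose_apply, SimpleGraph.adjMatrix_apply, SimpleGraph.adj_comm,
    apply_ite (star : ℂ → ℂ)]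

lemma expand_quadform (w z : V → ℂ) :
    Complex.re (star w ⬝ᵥ (Δ.adjMatrix ℂ).mulVec z) =
      ∑ v, ∑ u ∈ Δ.neighborFinset v, Complex.re (star (w v) * z u) := by
  rw [dotProduct, Complex.re_sum]
  apply Finset.sum_congr rfl
  intro v _
  rw [SimpleGraph.adjMatrix_mulVec_apply, Pi.star_apply, Finset.mul_sum, Complex.re_sum]

lemma quad_abs_ge (x : V → ℂ) :
    Complex.re (star x ⬝ᵥ (Δ.adjMatrix ℂ).mulVec x) ≤
      Complex.re (star (fun v => (‖x v‖ : ℂ)) ⬝ᵥ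
        (Δ.adjMatrix ℂ).mulVec (fun v => (‖x v‖ : ℂ))) := by
  rw [expand_quadform, expand_quadform]
  apply Finset.sum_le_sum
  intro v _
  apply Finset.sum_le_sum
  intro u _
  have h1 : Complex.re (star (x v) * x u) ≤ ‖star (x v) * x u‖ :=
    Complex.re_le_norm _
  have h2 : ‖star (x v) * x u‖ = ‖x v‖ * ‖x u‖ := by
    rw [norm_mul, RCLike.star_def, Complex.norm_conj]
  have h3 : star ((‖x v‖ : ℂ)) * (‖x u‖ : ℂ) =
      ((‖x v‖ * ‖x u‖ : ℝ) : ℂ) := by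
    rw [RCLike.star_def, Complex.conj_ofReal, Complex.ofReal_mul]
  rw [h3, Complex.ofReal_re]
  exact h1.trans (le_of_eq h2)

lemma normform_abs (x : V → ℂ) :
    Complex.re (star (fun v => (‖x v‖ : ℂ)) ⬝ᵥ
      (fun v => (‖x v‖ : ℂ))) = Complex.re (star x ⬝ᵥ x) := by
  rw [dotProduct, dotProduct, Complex.re_sum, Complex.re_sum]
  apply Finset.sum_congr rfl
  intro v _
  rw [Pi.star_apply, Pi.star_apply, RCLike.star_def, Complex.conj_ofReal,
    ← Complex.ofReal_mul, Complex.ofReal_re, ← Complex.normSq_eq_conj_mul_self,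
    Complex.ofReal_re, Complex.normSq_eq_norm_sq]
  ring

lemma abs_zero_propagate {x : V → ℂ} {t : ℝ}
    (h : (Δ.adjMatrix ℂ).mulVec (fun v => (‖x v‖ : ℂ)) =
      (t : ℂ) • (fun v => (‖x v‖ : ℂ)))
    {a b : V} (w : Δ.Walk a b) (ha : x a = 0) : x b = 0 := by
  induction w with
  | nil => exact ha
  | @cons a c b hadj p ih =>
      apply ih
      have h1 := congrFun h a
      rw [SimpleGraph.adjMatrix_mulVec_apply] at h1
      have h2 : ((∑ u ∈ Δ.neighborFinset a, ‖x u‖ : ℝ) : ℂ) = 0 := by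
        push_cast
        rw [h1, Pi.smul_apply, ha]
        simp
      have h3 : ∑ u ∈ Δ.neighborFinset a, ‖x u‖ = 0 :=
        Complex.ofReal_eq_zero.mp h2
      have h4 := (Finset.sum_eq_zero_iff_of_nonneg
        (fun u _ => norm_nonneg (x u))).mp h3 c
        ((SimpleGraph.mem_neighborFinset Δ a c).mpr hadj)
      exact norm_eq_zero.mp h4

lemma rootMultiplicity_lam1_le_card_components :
    (Δ.adjMatrix ℂ).charpoly.rootMultiplicity ((lam1 (Δ.adjMatrix ℂ) : ℂ)) ≤
      Nat.card Δ.ConnectedComponent := by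
  classical
  haveI : Fintype Δ.ConnectedComponent := Fintype.ofFinite _
  have hM : (Δ.adjMatrix ℂ).IsHermitian := adj_isHermitian Δ
  set M := Δ.adjMatrix ℂ with hMdef
  set t : ℝ := lam1 M with htdef
  have ht : ∀ i, hM.eigenvalues i ≤ t := fun i => eigenvalues_le_lam1 hM i
  have hrepex : ∀ c : Δ.ConnectedComponent, ∃ v, Δ.connectedComponentMk v = c :=
    fun c => c.exists_rep
  choose rep hrep using hrepex
  have hli : LinearIndependent ℂ (fun (i : {i : V // hM.eigenvalues i = t})
      (c : Δ.ConnectedComponent) =>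
        (hM.eigenvectorUnitary : Matrix V V ℂ) (rep c) i.val) := by
    rw [Fintype.linearIndependent_iff]
    intro g hg
    set c' : V → ℂ := fun i => if h : hM.eigenvalues i = t then g ⟨i, h⟩ else 0 with hc'
    set x : V → ℂ := (hM.eigenvectorUnitary : Matrix V V ℂ).mulVec c' with hxdef
    have hxc : coords hM x = c' := by
      rw [coords, hxdef, Matrix.mulVec_mulVec,
        Matrix.mem_unitaryGroup_iff'.mp hM.eigenvectorUnitary.2, Matrix.one_mulVec]
    have hxval : ∀ v, x v = ∑ i : {i : V // hM.eigenvalues i = t},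
        (hM.eigenvectorUnitary : Matrix V V ℂ) v i.val * g i := by
      intro v
      have e1 : x v = ∑ i, (hM.eigenvectorUnitary : Matrix V V ℂ) v i * c' i := by
        rw [hxdef]
        simp [Matrix.mulVec, dotProduct]
      have e2 : ∑ i ∈ Finset.univ.filter (fun i => hM.eigenvalues i = t),
          (hM.eigenvectorUnitary : Matrix V V ℂ) v i * c' i
          = ∑ i, (hM.eigenvectorUnitary : Matrix V V ℂ) v i * c' i := by
        apply Finset.sum_subset (Finset.filter_subset _ _)
        intro i _ hi
        rw [Finset.mem_filter] at hi
        push_neg at hi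
        rw [hc']
        simp only []
        rw [dif_neg (hi (Finset.mem_univ i))]
        exact mul_zero _
      have e3 : ∑ i ∈ Finset.univ.filter (fun i => hM.eigenvalues i = t),
          (hM.eigenvectorUnitary : Matrix V V ℂ) v i * c' i
          = ∑ i : {i : V // hM.eigenvalues i = t},
            (hM.eigenvectorUnitary : Matrix V V ℂ) v i.val * c' i.val := by
        apply Finset.sum_subtype
        intro i
        simp
      have e4 : ∀ i : {i : V // hM.eigenvalues i = t}, c' i.val = g i := by
        intro i
        rw [hc']
        simp only []
        rw [dif_pos i.2]
      rw [e1, ← e2, e3]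
      exact Finset.sum_congr rfl (fun i _ => by rw [e4])
    have hDc : (Matrix.diagonal (RCLike.ofReal ∘ hM.eigenvalues)).mulVec c' = (t : ℂ) • c' := by
      funext i
      rw [Matrix.mulVec_diagonal, Pi.smul_apply, smul_eq_mul]
      by_cases h : hM.eigenvalues i = t
      · rw [Function.comp_apply, h]
        simp [rclike_ofReal_eq]
      · have h0 : c' i = 0 := by
          rw [hc']
          simp only []
          rw [dif_neg h]
        rw [h0, mul_zero, mul_zero]
    have hMx : M.mulVec x = (t : ℂ) • x := by
      rw [mulVec_eq_spectral hM x, hxc, hDc, Matrix.mulVec_smul]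
    have hxrep : ∀ c : Δ.ConnectedComponent, x (rep c) = 0 := by
      intro c
      have h5 := congrFun hg c
      rw [Finset.sum_apply] at h5
      simp only [Pi.smul_apply, smul_eq_mul, Pi.zero_apply] at h5
      rw [hxval (rep c), ← h5]
      exact Finset.sum_congr rfl (fun i _ => mul_comm _ _)
    have hquad : Complex.re (star x ⬝ᵥ M.mulVec x) = t * Complex.re (star x ⬝ᵥ x) := by
      rw [hMx, dotProduct_smul, smul_eq_mul, Complex.re_ofReal_mul]
    set y : V → ℂ := fun v => (‖x v‖ : ℂ) with hy
    have h1 : t * Complex.re (star y ⬝ᵥ y) ≤ Complex.re (star y ⬝ᵥ M.mulVec y) := by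
      rw [hy, normform_abs, ← hquad]
      exact quad_abs_ge Δ x
    have h2 : Complex.re (star y ⬝ᵥ M.mulVec y) ≤ t * Complex.re (star y ⬝ᵥ y) :=
      rayleigh_le hM ht y
    have hMy : M.mulVec y = (t : ℂ) • y :=
      eigenvec_of_rayleigh_eq hM ht (le_antisymm h2 h1)
    have hx0 : ∀ v, x v = 0 := by
      intro v
      have hreach : Δ.Reachable (rep (Δ.connectedComponentMk v)) v :=
        SimpleGraph.ConnectedComponent.exact (hrep (Δ.connectedComponentMk v))
      obtain ⟨w⟩ := hreach
      exact abs_zero_propagate Δ hMy w (hxrep _)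
    intro i
    have hc0 : c' = 0 := by
      have hx00 : x = 0 := by
        funext v
        exact hx0 v
      rw [← hxc, hx00, coords, Matrix.mulVec_zero]
    have := congrFun hc0 i.val
    rw [hc'] at this
    simp only [] at this
    rw [dif_pos i.2] at this
    simpa using this
  have hcard := hli.fintype_card_le_finrank
  rw [Module.finrank_pi] at hcard
  rw [rootMultiplicity_charpoly_hermitian hM, Nat.card_eq_fintype_card]
  have hfc : (Finset.univ.filter (fun i => (hM.eigenvalues i : ℂ) = ((lam1 M : ℝ) : ℂ))).card
      = Fintype.card {i : V // hM.eigenvalues i = t} := by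
    rw [Fintype.card_subtype]
    congr 1
    apply Finset.filter_congr
    intro i _
    rw [htdef]
    simp [Complex.ofReal_inj]
  rw [hfc]
  exact hcard

lemma one_le_rootMultiplicity_lam1 [Nonempty V] :
    1 ≤ (Δ.adjMatrix ℂ).charpoly.rootMultiplicity ((lam1 (Δ.adjMatrix ℂ) : ℂ)) := by
  have hM := adj_isHermitian Δ
  obtain ⟨i, hi⟩ := lam1_mem hM
  rw [rootMultiplicity_charpoly_hermitian hM]
  refine Finset.card_pos.mpr ⟨i, ?_⟩
  simp [hi]

lemma nat_card_components_connected (h : Δ.Connected) :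
    Nat.card Δ.ConnectedComponent = 1 := by
  have hsub : Subsingleton Δ.ConnectedComponent := by
    constructor
    intro a b
    obtain ⟨va, ha⟩ := a.exists_rep
    obtain ⟨vb, hb⟩ := b.exists_rep
    rw [← ha, ← hb]
    exact SimpleGraph.ConnectedComponent.sound (h.preconnected va vb)
  have hne : Nonempty Δ.ConnectedComponent := by
    have : Nonempty V := h.nonempty
    exact ⟨Δ.connectedComponentMk (Classical.arbitrary _)⟩
  rw [Nat.card_eq_one_iff_unique]
  exact ⟨hsub, hne⟩

lemma rootMultiplicity_pow_poly (p : ℂ[X]) (k : ℕ) (μ : ℂ) :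
    (p ^ k).rootMultiplicity μ = k * p.rootMultiplicity μ := by
  classical
  rw [← Polynomial.count_roots, Polynomial.roots_pow, Multiset.count_nsmul,
    Polynomial.count_roots]

end GraphSpectral

end Spectral

section WG

variable {n : ℕ} {Γ : SimpleGraph (Fin n)} {M : Type*} [Monoid M] (Ψ : Fin n → Fin n → M)

@[simp] lemma walkGain_nil {u : Fin n} : walkGain Ψ (SimpleGraph.Walk.nil : Γ.Walk u u) = 1 := rfl

@[simp] lemma walkGain_cons {u v w : Fin n} (h : Γ.Adj u v) (p : Γ.Walk v w) :
    walkGain Ψ (SimpleGraph.Walk.cons h p) = Ψ u v * walkGain Ψ p := by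
  simp [walkGain]

@[simp] lemma walkGain_append {u v w : Fin n} (p : Γ.Walk u v) (q : Γ.Walk v w) :
    walkGain Ψ (p.append q) = walkGain Ψ p * walkGain Ψ q := by
  simp [walkGain, SimpleGraph.Walk.darts_append]

end WG

section WG2

variable {n : ℕ} {Γ : SimpleGraph (Fin n)} {Ψ : Fin n → Fin n → G}

lemma walkGain_reverse (hΨ : IsGain Γ Ψ) {u v : Fin n} (p : Γ.Walk u v) :
    walkGain Ψ p.reverse = (walkGain Ψ p)⁻¹ := by
  induction p with
  | nil => simp
  | cons h p ih =>
      rw [SimpleGraph.Walk.reverse_cons, walkGain_append, ih, walkGain_cons, walkGain_cons,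
        walkGain_nil, mul_one, hΨ _ _ h, _root_.mul_inv_rev]

/-- From balance, a potential function. -/
lemma exists_potential (hconn : Γ.Connected) (hΨ : IsGain Γ Ψ) (hbal : IsBalanced Γ Ψ) :
    ∃ θ : Fin n → G, ∀ i j, Γ.Adj i j → Ψ i j = (θ i)⁻¹ * θ j := by
  have : Nonempty (Fin n) := hconn.nonempty
  obtain ⟨v₀⟩ := this
  have hwalk : ∀ u : Fin n, Nonempty (Γ.Walk v₀ u) := fun u => hconn.preconnected v₀ u
  refine ⟨fun u => walkGain Ψ (hwalk u).some, fun i j hij => ?_⟩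
  have hclosed := hbal v₀
    (((hwalk i).some.append (SimpleGraph.Walk.cons hij SimpleGraph.Walk.nil)).append
      (hwalk j).some.reverse)
  rw [walkGain_append, walkGain_append, walkGain_cons, walkGain_nil, mul_one,
    walkGain_reverse hΨ] at hclosed
  rw [mul_inv_eq_one] at hclosed
  show Ψ i j = (walkGain Ψ (hwalk i).some)⁻¹ * walkGain Ψ (hwalk j).some
  rw [← hclosed]
  group

/-- The cover graph as a simple graph. -/
def coverGraph {n : ℕ} (Γ : SimpleGraph (Fin n)) (Ψ : Fin n → Fin n → G) (hΨ : IsGain Γ Ψ) :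
    SimpleGraph (Fin n × G) where
  Adj p q := Γ.Adj p.1 q.1 ∧ q.2 = (Ψ p.1 q.1)⁻¹ * p.2
  symm := ⟨by
    rintro p q ⟨hadj, he⟩
    refine ⟨hadj.symm, ?_⟩
    rw [hΨ _ _ hadj, he]
    group⟩
  loopless := ⟨fun p h => Γ.loopless.irrefl p.1 h.1⟩

lemma coverGraph_adj (hΨ : IsGain Γ Ψ) (p q : Fin n × G) :
    (coverGraph Γ Ψ hΨ).Adj p q ↔ Γ.Adj p.1 q.1 ∧ q.2 = (Ψ p.1 q.1)⁻¹ * p.2 := Iff.rfl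

/-- Walk lifting. -/
lemma lift_walk (hΨ : IsGain Γ Ψ) {u v : Fin n} (p : Γ.Walk u v) (g : G) :
    (coverGraph Γ Ψ hΨ).Reachable (u, g) (v, (walkGain Ψ p)⁻¹ * g) := by
  induction p generalizing g with
  | nil => simpa using SimpleGraph.Reachable.refl _
  | @cons a b c h p ih =>
      have h1 : (coverGraph Γ Ψ hΨ).Adj (a, g) (b, (Ψ a b)⁻¹ * g) := ⟨h, rfl⟩
      have h2 := ih ((Ψ a b)⁻¹ * g)
      have : (walkGain Ψ p)⁻¹ * ((Ψ a b)⁻¹ * g) =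
          (walkGain Ψ (SimpleGraph.Walk.cons h p))⁻¹ * g := by
        rw [walkGain_cons, _root_.mul_inv_rev, mul_assoc]
      rw [this] at h2
      exact h1.reachable.trans h2

/-- KEY: if the cover graph has at least `|G|` connected components, the gain graph
is balanced. -/
lemma balanced_of_card_components [Fintype G] (hconn : Γ.Connected) (hΨ : IsGain Γ Ψ)
    (hk : Fintype.card G ≤ Nat.card (coverGraph Γ Ψ hΨ).ConnectedComponent) :
    IsBalanced Γ Ψ := by
  classical
  set Δ := coverGraph Γ Ψ hΨ with hΔ
  set cm : Fin n × G → Δ.ConnectedComponent := Δ.connectedComponentMk with hcm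
  have : Nonempty (Fin n) := hconn.nonempty
  -- fibers
  set S : Δ.ConnectedComponent → Finset (Fin n × G) :=
    fun c => Finset.univ.filter (fun p => cm p = c) with hS
  have hsum : ∑ c, (S c).card = n * Fintype.card G := by
    rw [← Finset.card_eq_sum_card_fiberwise (fun x _ => Finset.mem_univ (cm x))]
    simp [Finset.card_univ]
  -- the injection into each fiber
  have hwalk : ∀ u v : Fin n, Nonempty (Γ.Walk u v) := fun u v => hconn.preconnected u v
  have hinj : ∀ p₀ : Fin n × G, ∃ f : Fin n → Fin n × G, Function.Injective f ∧
      (∀ u, (f u).1 = u) ∧ ∀ u, cm (f u) = cm p₀ := by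
    intro p₀
    refine ⟨fun u => (u, (walkGain Ψ (hwalk p₀.1 u).some)⁻¹ * p₀.2), ?_, fun u => rfl, ?_⟩
    · intro a b hab
      exact congrArg Prod.fst hab
    · intro u
      have := lift_walk hΨ (hwalk p₀.1 u).some p₀.2
      exact (SimpleGraph.ConnectedComponent.sound this).symm
  have hlow : ∀ c : Δ.ConnectedComponent, n ≤ (S c).card := by
    intro c
    obtain ⟨p₀, hp₀⟩ := c.exists_rep
    obtain ⟨f, hfinj, -, hfcm⟩ := hinj p₀
    have : (Finset.univ : Finset (Fin n)).card ≤ (S c).card := by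
      apply Finset.card_le_card_of_injOn f
      · intro u _
        simp only [hS, Finset.mem_coe, Finset.mem_filter, Finset.mem_univ, true_and]
        rw [hfcm u]
        exact hp₀
      · exact hfinj.injOn
    simpa using this
  -- all fibers have size exactly n
  rw [Nat.card_eq_fintype_card] at hk
  have hcomp : ∀ c : Δ.ConnectedComponent, (S c).card = n := by
    have h1 : ∑ _c : Δ.ConnectedComponent, n ≤ ∑ c, (S c).card :=
      Finset.sum_le_sum (fun c _ => hlow c)
    have h2 : ∑ _c : Δ.ConnectedComponent, n = Fintype.card Δ.ConnectedComponent * n := by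
      simp [Finset.sum_const, Finset.card_univ, Nat.smul_one_eq_cast]
    have h3 : n * Fintype.card G ≤ Fintype.card Δ.ConnectedComponent * n := by
      calc n * Fintype.card G ≤ n * Fintype.card Δ.ConnectedComponent :=
            Nat.mul_le_mul_left _ hk
        _ = _ := Nat.mul_comm _ _
    have h4 : ∑ c, (S c).card ≤ ∑ _c : Δ.ConnectedComponent, n := by
      rw [hsum, h2]; exact h3
    have heq := le_antisymm h1 h4
    intro c
    exact ((Finset.sum_eq_sum_iff_of_le (fun c _ => hlow c)).mp heq c (Finset.mem_univ c)).symm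
  intro v p
  set x := walkGain Ψ p with hx
  obtain ⟨f, hfinj, hffst, hfcm⟩ := hinj (v, (1 : G))
  set c₀ := cm (v, (1 : G)) with hc₀
  have himg : Finset.image f Finset.univ = S c₀ := by
    apply Finset.eq_of_subset_of_card_le
    · intro q hq
      obtain ⟨u, -, rfl⟩ := Finset.mem_image.mp hq
      simp only [hS, Finset.mem_filter, Finset.mem_univ, true_and]
      rw [hfcm u]
    · rw [hcomp c₀, Finset.card_image_of_injective _ hfinj]
      simp
  have hmem1 : (v, (1 : G)) ∈ S c₀ := by
    simp [hS, hc₀]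
  have hmem2 : (v, x⁻¹) ∈ S c₀ := by
    simp only [hS, Finset.mem_filter, Finset.mem_univ, true_and]
    exact (SimpleGraph.ConnectedComponent.sound (by simpa using lift_walk hΨ p 1)).symm
  rw [← himg] at hmem1 hmem2
  obtain ⟨u1, -, h1⟩ := Finset.mem_image.mp hmem1
  obtain ⟨u2, -, h2⟩ := Finset.mem_image.mp hmem2
  have hu1 : u1 = v := by rw [← hffst u1, h1]
  have hu2 : u2 = v := by rw [← hffst u2, h2]
  rw [hu1] at h1
  rw [hu2] at h2
  have hvv : ((v, (1 : G)) : Fin n × G) = (v, x⁻¹) := by rw [← h1, ← h2]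
  have := congrArg Prod.snd hvv
  exact inv_eq_one.mp this.symm

/-- From the structure equivalence, at least `|G|` components. -/
lemma card_components_of_equiv [Fintype G] (hconn : Γ.Connected) (hΨ : IsGain Γ Ψ)
    (e : (Fin n × G) ≃ (Fin n × G))
    (he : ∀ p q, (Γ.Adj p.1 q.1 ∧ q.2 = (Ψ p.1 q.1)⁻¹ * p.2) ↔
      (Γ.Adj (e p).1 (e q).1 ∧ (e p).2 = (e q).2)) :
    Fintype.card G ≤ Nat.card (coverGraph Γ Ψ hΨ).ConnectedComponent := by
  classical
  have hne : Nonempty (Fin n) := hconn.nonempty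
  obtain ⟨v₀⟩ := hne
  have hconst : ∀ (p q : Fin n × G) (w : (coverGraph Γ Ψ hΨ).Walk p q),
      (e p).2 = (e q).2 := by
    intro p q w
    induction w with
    | nil => rfl
    | cons h _ ih => exact ((he _ _).mp h).2.trans ih
  set φ : (coverGraph Γ Ψ hΨ).ConnectedComponent → G :=
    SimpleGraph.ConnectedComponent.lift (fun p => (e p).2)
      (fun p q w _ => hconst p q w) with hφ
  have hsurj : Function.Surjective φ := by
    intro g
    refine ⟨(coverGraph Γ Ψ hΨ).connectedComponentMk (e.symm (v₀, g)), ?_⟩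
    simp [hφ]
  rw [Nat.card_eq_fintype_card]
  exact Fintype.card_le_of_surjective φ hsurj

end WG2

section Forward

variable {n : ℕ} {Γ : SimpleGraph (Fin n)} {Ψ : Fin n → Fin n → G}

/-- The vertex relabelling induced by a potential. -/
def shiftEquiv (θ : Fin n → G) : (Fin n × G) ≃ (Fin n × G) where
  toFun p := (p.1, θ p.1 * p.2)
  invFun p := (p.1, (θ p.1)⁻¹ * p.2)
  left_inv p := by simp
  right_inv p := by simp

lemma coverAdj_iff_of_potential (θ : Fin n → G)
    (hθ : ∀ i j, Γ.Adj i j → Ψ i j = (θ i)⁻¹ * θ j) (p q : Fin n × G) :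
    (Γ.Adj p.1 q.1 ∧ q.2 = (Ψ p.1 q.1)⁻¹ * p.2) ↔
      (Γ.Adj (shiftEquiv θ p).1 (shiftEquiv θ q).1 ∧
        (shiftEquiv θ p).2 = (shiftEquiv θ q).2) := by
  simp only [shiftEquiv, Equiv.coe_fn_mk]
  constructor
  · rintro ⟨h, he⟩
    refine ⟨h, ?_⟩
    rw [he, hθ _ _ h]
    group
  · rintro ⟨h, he⟩
    refine ⟨h, ?_⟩
    rw [hθ _ _ h]
    calc q.2 = (θ q.1)⁻¹ * (θ q.1 * q.2) := by group
      _ = (θ q.1)⁻¹ * (θ p.1 * p.2) := by rw [he]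
      _ = ((θ p.1)⁻¹ * θ q.1)⁻¹ * p.2 := by group

lemma coverMatrix_eq_of_potential [Fintype G] [DecidableEq G] [DecidableRel Γ.Adj]
    (θ : Fin n → G) (hθ : ∀ i j, Γ.Adj i j → Ψ i j = (θ i)⁻¹ * θ j) :
    coverMatrix Γ Ψ = (Matrix.blockDiagonal fun _ : G => Γ.adjMatrix ℂ).submatrix
      (shiftEquiv θ) (shiftEquiv θ) := by
  ext p q
  have hiff := coverAdj_iff_of_potential θ hθ p q
  simp only [coverMatrix, Matrix.of_apply, Matrix.submatrix_apply]
  have hrhs : (Matrix.blockDiagonal fun _ : G => Γ.adjMatrix ℂ) (shiftEquiv θ p)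
      (shiftEquiv θ q) = if (Γ.Adj (shiftEquiv θ p).1 (shiftEquiv θ q).1 ∧
        (shiftEquiv θ p).2 = (shiftEquiv θ q).2) then 1 else 0 := by
    rcases shiftEquiv θ p with ⟨a, b⟩
    rcases shiftEquiv θ q with ⟨c, d⟩
    simp only [Matrix.blockDiagonal_apply, SimpleGraph.adjMatrix_apply]
    by_cases hbd : b = d <;> by_cases hac : Γ.Adj a c <;> simp [hbd, hac, and_comm]
  rw [hrhs]
  by_cases h1 : Γ.Adj p.1 q.1 ∧ q.2 = (Ψ p.1 q.1)⁻¹ * p.2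
  · rw [if_pos h1, if_pos (hiff.mp h1)]
  · rw [if_neg h1, if_neg (fun h => h1 (hiff.mpr h))]

lemma charpoly_blockDiagonal {m o R : Type*} [CommRing R] [DecidableEq m] [Fintype m]
    [DecidableEq o] [Fintype o] (M : Matrix m m R) :
    (Matrix.blockDiagonal fun _ : o => M).charpoly = M.charpoly ^ Fintype.card o := by
  have hcm : Matrix.charmatrix (Matrix.blockDiagonal fun _ : o => M) =
      Matrix.blockDiagonal fun _ : o => M.charmatrix := by
    ext ⟨i, k⟩ ⟨j, k'⟩
    by_cases hk : k = k' <;> by_cases hij : i = j <;>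
      simp [Matrix.charmatrix_apply, Matrix.blockDiagonal_apply, Matrix.diagonal_apply,
        Prod.ext_iff, hk, hij]
  rw [Matrix.charpoly, hcm, Matrix.det_blockDiagonal]
  simp [Matrix.charpoly, Finset.prod_const, Finset.card_univ]

lemma charpoly_submatrix_equiv {m m' R : Type*} [CommRing R] [DecidableEq m] [Fintype m]
    [DecidableEq m'] [Fintype m'] (M : Matrix m m R) (e : m' ≃ m) :
    (M.submatrix e e).charpoly = M.charpoly := by
  have : M.submatrix e e = Matrix.reindex e.symm e.symm M := by
    simp [Matrix.reindex_apply]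
  rw [this, Matrix.charpoly_reindex]

lemma charpoly_coverMatrix_of_potential [Fintype G] [DecidableEq G] [DecidableRel Γ.Adj]
    (θ : Fin n → G) (hθ : ∀ i j, Γ.Adj i j → Ψ i j = (θ i)⁻¹ * θ j) :
    (coverMatrix Γ Ψ).charpoly = (Γ.adjMatrix ℂ).charpoly ^ Fintype.card G := by
  rw [coverMatrix_eq_of_potential θ hθ, charpoly_submatrix_equiv, charpoly_blockDiagonal]

end Forward


/-- balance of a connected gain graph on a finite group of order `k`,
characterized via the spectrum, the index (with multiplicity) and the structure of
the cover graph. -/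
theorem statement18 {G : Type*} [Group G] [Fintype G] [DecidableEq G] {n : ℕ}
    (Γ : SimpleGraph (Fin n)) [DecidableRel Γ.Adj] (hconn : Γ.Connected)
    (Ψ : Fin n → Fin n → G) (hΨ : IsGain Γ Ψ) :
    (IsBalanced Γ Ψ ↔
      (coverMatrix Γ Ψ).charpoly = (Γ.adjMatrix ℂ).charpoly ^ Fintype.card G) ∧
    (IsBalanced Γ Ψ ↔
      lam1 (coverMatrix Γ Ψ) = lam1 (Γ.adjMatrix ℂ) ∧
      (coverMatrix Γ Ψ).charpoly.rootMultiplicity ((lam1 (Γ.adjMatrix ℂ) : ℂ)) =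
        Fintype.card G) ∧
    (IsBalanced Γ Ψ ↔
      ∃ e : (Fin n × G) ≃ (Fin n × G),
        ∀ p q, coverAdj Γ Ψ p q ↔ (Γ.Adj (e p).1 (e q).1 ∧ (e p).2 = (e q).2)) := by
  classical
  have hne : Nonempty (Fin n) := hconn.nonempty
  set Δ := coverGraph Γ Ψ hΨ with hΔ
  haveI : DecidableRel Δ.Adj := fun p q => Classical.dec _
  have covM : Δ.adjMatrix ℂ = coverMatrix Γ Ψ := by
    ext p q
    rw [SimpleGraph.adjMatrix_apply]
    exact if_congr Iff.rfl rfl rfl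
  have fwd : IsBalanced Γ Ψ →
      (coverMatrix Γ Ψ).charpoly = (Γ.adjMatrix ℂ).charpoly ^ Fintype.card G := by
    intro hbal
    obtain ⟨θ, hθ⟩ := exists_potential hconn hΨ hbal
    exact charpoly_coverMatrix_of_potential θ hθ
  have fwd_equiv : IsBalanced Γ Ψ → ∃ e : (Fin n × G) ≃ (Fin n × G),
      ∀ p q, coverAdj Γ Ψ p q ↔ (Γ.Adj (e p).1 (e q).1 ∧ (e p).2 = (e q).2) := by
    intro hbal
    obtain ⟨θ, hθ⟩ := exists_potential hconn hΨ hbal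
    exact ⟨shiftEquiv θ, fun p q => coverAdj_iff_of_potential θ hθ p q⟩
  have h23 : (coverMatrix Γ Ψ).charpoly = (Γ.adjMatrix ℂ).charpoly ^ Fintype.card G →
      lam1 (coverMatrix Γ Ψ) = lam1 (Γ.adjMatrix ℂ) ∧
      (coverMatrix Γ Ψ).charpoly.rootMultiplicity ((lam1 (Γ.adjMatrix ℂ) : ℂ)) =
        Fintype.card G := by
    intro hchar
    have hk0 : (Fintype.card G) ≠ 0 := Fintype.card_ne_zero
    have hsets : {x : ℝ | (coverMatrix Γ Ψ).charpoly.IsRoot (x : ℂ)} =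
        {x : ℝ | (Γ.adjMatrix ℂ).charpoly.IsRoot (x : ℂ)} := by
      ext xr
      simp only [Set.mem_setOf_eq, hchar, Polynomial.IsRoot.def, Polynomial.eval_pow]
      exact pow_eq_zero_iff hk0
    have hl : lam1 (coverMatrix Γ Ψ) = lam1 (Γ.adjMatrix ℂ) := by
      unfold lam1
      rw [hsets]
    have hmult1 : (Γ.adjMatrix ℂ).charpoly.rootMultiplicity ((lam1 (Γ.adjMatrix ℂ) : ℂ)) = 1 := by
      have hle := rootMultiplicity_lam1_le_card_components Γ
      rw [nat_card_components_connected Γ hconn] at hle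
      have hge := one_le_rootMultiplicity_lam1 Γ
      omega
    refine ⟨hl, ?_⟩
    rw [hchar, rootMultiplicity_pow_poly, hmult1, mul_one]
  have h31 : (lam1 (coverMatrix Γ Ψ) = lam1 (Γ.adjMatrix ℂ) ∧
      (coverMatrix Γ Ψ).charpoly.rootMultiplicity ((lam1 (Γ.adjMatrix ℂ) : ℂ)) =
        Fintype.card G) → IsBalanced Γ Ψ := by
    rintro ⟨hl, hm⟩
    apply balanced_of_card_components hconn hΨ
    have hle := rootMultiplicity_lam1_le_card_components Δ
    rw [covM, hl, hm] at hle
    exact hle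
  have h41 : (∃ e : (Fin n × G) ≃ (Fin n × G),
      ∀ p q, coverAdj Γ Ψ p q ↔ (Γ.Adj (e p).1 (e q).1 ∧ (e p).2 = (e q).2)) →
      IsBalanced Γ Ψ := by
    rintro ⟨e, he⟩
    exact balanced_of_card_components hconn hΨ (card_components_of_equiv hconn hΨ e he)
  exact ⟨⟨fwd, fun hch => h31 (h23 hch)⟩, ⟨fun hbal => h23 (fwd hbal), h31⟩,
    ⟨fwd_equiv, h41⟩⟩

end GainPaper
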